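/- Under the conditions |a|<l and r>r₊>0 with Δ₋(r)>0, one has the estimate (r−r₊)(r+r₊)(r²−r₊²)/Δ₋(r) ≤ l². -/

import Mathlib

/-- Δ₋(r) for the Kerr-AdS spacetime with parameters (M, a, l). -/
noncomputable def Dm (M l a r : ℝ) : ℝ := (r^2 + a^2) * (1 + r^2/l^2) - 2*M*r

/-- the estimate (r−r₊)(r+r₊)(r²−r₊²) ≤ l² Δ₋(r) for r ≥ r₊. -/
theorem stmt_1 (M l a rp : ℝ) (hM : 0 < M) (hl : 0 < l) (ha : |a| < l)
    (hrp : 0 < rp) (hroot : Dm M l a rp = 0)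
    (hlargest : ∀ s : ℝ, Dm M l a s = 0 → s ≤ rp) :
    ∀ r : ℝ, rp ≤ r →
      (r - rp) * (r + rp) * (r^2 - rp^2) ≤ l^2 * Dm M l a r := by
  have hl2 : (0:ℝ) < l^2 := by positivity
  have hlne : (l:ℝ) ≠ 0 := ne_of_gt hl
  -- root condition, cleared of denominators
  have hM2 : 2*M*rp*l^2 = (rp^2+a^2)*(l^2+rp^2) := by
    have h0 := hroot
    unfold Dm at h0
    field_simp at h0
    linarith
  -- the cubic factor times rp
  set Qn : ℝ → ℝ := fun x => rp*x^3 + rp^2*x^2 + rp*(rp^2+a^2+l^2)*x - a^2*l^2 with hQn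
  have hid : ∀ x : ℝ, l^2 * rp * Dm M l a x = (x - rp) * Qn x := by
    intro x
    unfold Dm
    simp only [hQn]
    field_simp
    linear_combination (-x) * hM2
  -- Dm is nonnegative beyond the largest root
  have hDm : ∀ r : ℝ, rp < r → 0 ≤ Dm M l a r := by
    intro r hr
    by_contra h
    push_neg at h
    set R := r + 1 + 2*M*l^2 with hR
    have hrR : r ≤ R := by nlinarith
    have hRpos : 0 < Dm M l a R := by
      have hRid : l^2 * Dm M l a R = (R^2+a^2)*(l^2+R^2) - 2*M*l^2*R := by
        unfold Dm; field_simp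
      have hR1 : 1 + 2*M*l^2 ≤ R := by nlinarith
      have hpos : 0 < l^2 * Dm M l a R := by
        rw [hRid]
        nlinarith [sq_nonneg a, sq_nonneg R, sq_nonneg (R-1), mul_pos hM hl2,
          sq_nonneg (R*l), mul_pos hrp (lt_of_lt_of_le hrp hr.le)]
      nlinarith
    have hcont : ContinuousOn (Dm M l a) (Set.Icc r R) := by
      unfold Dm
      apply ContinuousOn.sub
      · exact ((continuousOn_pow 2).add continuousOn_const).mul
          (continuousOn_const.add ((continuousOn_pow 2).div_const _))
      · exact continuousOn_const.mul continuousOn_id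
    have hmem : (0:ℝ) ∈ Set.Icc (Dm M l a r) (Dm M l a R) := ⟨h.le, hRpos.le⟩
    obtain ⟨s, hs, hs0⟩ := intermediate_value_Icc hrR hcont hmem
    have := hlargest s hs0
    have : rp < s := lt_of_lt_of_le hr hs.1
    linarith [hlargest s hs0]
  -- hence the cubic factor is nonnegative beyond rp
  have hQpos : ∀ x : ℝ, rp < x → 0 ≤ Qn x := by
    intro x hx
    have h1 : 0 ≤ (x - rp) * Qn x := by
      rw [← hid x]
      exact mul_nonneg (mul_nonneg hl2.le hrp.le) (hDm x hx)
    nlinarith [sub_pos.mpr hx]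
  -- by continuity, Qn rp ≥ 0
  have hQrp : 0 ≤ Qn rp := by
    have hc : ContinuousAt Qn rp := by
      simp only [hQn]; fun_prop
    have ht : Filter.Tendsto Qn (nhdsWithin rp (Set.Ioi rp)) (nhds (Qn rp)) :=
      hc.continuousWithinAt.tendsto
    exact ge_of_tendsto ht (eventually_nhdsWithin_of_forall fun x hx => hQpos x hx)
  -- Qn rp = 3rp⁴ + rp²(a²+l²) − a²l² ≥ 0
  have hC : 0 ≤ 3*rp^4 + rp^2*(a^2+l^2) - a^2*l^2 := by
    have : Qn rp = 3*rp^4 + rp^2*(a^2+l^2) - a^2*l^2 := by simp only [hQn]; ring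
    linarith [hQrp, this ▸ hQrp]
  -- final estimate
  intro r hr
  have hid' := hid r
  have hrr : 0 ≤ r - rp := sub_nonneg.mpr hr
  have h1 : 0 ≤ (r - rp) * (3*rp^4 + rp^2*(a^2+l^2) - a^2*l^2) := mul_nonneg hrr hC
  have h2 : 0 ≤ (r - rp) * (r - rp) * (2*rp^3 + rp*(a^2+l^2)) := by positivity
  have key : rp * ((r - rp) * (r + rp) * (r^2 - rp^2)) ≤ rp * (l^2 * Dm M l a r) := by
    have : rp * (l^2 * Dm M l a r) = (r - rp) * Qn r := by linarith [hid' ]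
    rw [this]
    simp only [hQn]
    nlinarith [h1, h2]
  exact le_of_mul_le_mul_left key hrp
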